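/- Let F/E be a finite degree field extension, k ≤ n, and G ∈ F^{k×n} of rank k. If for every n×k matrix M over E of rank k the matrix GM is invertible, then the code C = {xG : x ∈ F^k} is a maximum rank distance code: every nonzero codeword has rank at least n-k+1 with respect to E. -/

import Mathlib

/-- If G ∈ F^{k×n} has rank k and GM is invertible for every n×k matrix M
over E of rank k, then the code {xG : x ∈ F^k} is MRD: every nonzero codeword has rank
at least n-k+1 with respect to E. -/
theorem stmt_13 (E F : Type*) [Field E] [Field F] [Algebra E F]
    (m n k : ℕ) (hm : Module.finrank E F = m) (hkn : k ≤ n) (hn : n ≤ m)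
    (G : Matrix (Fin k) (Fin n) F) (hG : G.rank = k)
    (hinv : ∀ M : Matrix (Fin n) (Fin k) E, M.rank = k →
      (G * M.map (algebraMap E F)).det ≠ 0) :
    ∀ x : Fin k → F, x ≠ 0 →
      n - k + 1 ≤ Module.finrank E (Submodule.span E (Set.range (Matrix.vecMul x G))) := by
  intro x hx
  by_contra hcon
  push_neg at hcon
  have hle : Module.finrank E (Submodule.span E (Set.range (Matrix.vecMul x G))) ≤ n - k := by
    omega
  set c : Fin n → F := Matrix.vecMul x G with hc
  -- the linear map sending coefficient vectors to combinations of the c i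
  set φ : (Fin n → E) →ₗ[E] F := Fintype.linearCombination E c with hφ
  have hrange : LinearMap.range φ = Submodule.span E (Set.range c) :=
    Fintype.range_linearCombination E c
  have hrn : Module.finrank E (LinearMap.range φ) + Module.finrank E (LinearMap.ker φ)
      = Module.finrank E (Fin n → E) := LinearMap.finrank_range_add_finrank_ker φ
  have hpi : Module.finrank E (Fin n → E) = n := by simp
  have hker : k ≤ Module.finrank E (LinearMap.ker φ) := by
    rw [hrange] at hrn
    omega
  obtain ⟨f, hf⟩ := exists_linearIndependent_of_le_finrank hker
  have hf' : LinearIndependent E (fun j => ((f j : Fin n → E))) :=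
    hf.map' (LinearMap.ker φ).subtype (Submodule.ker_subtype _)
  set M : Matrix (Fin n) (Fin k) E := Matrix.of fun i j => (f j : Fin n → E) i with hM
  have hMT : Matrix.transpose M = fun j => (f j : Fin n → E) := rfl
  have hMrank : M.rank = k := by
    rw [Matrix.rank_eq_finrank_span_cols, show M.col = fun j => (f j : Fin n → E) from hMT]
    rw [finrank_span_eq_card hf', Fintype.card_fin]
  have hdet := hinv M hMrank
  -- the codeword annihilates M
  have hcM : Matrix.vecMul c (M.map (algebraMap E F)) = 0 := by
    funext j
    have hfj : φ (f j : Fin n → E) = 0 := (f j).2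
    simp only [Matrix.vecMul, dotProduct, Matrix.map_apply, hM, Matrix.of_apply,
      Pi.zero_apply]
    have heq : ∑ i, c i * algebraMap E F ((f j : Fin n → E) i) = φ (f j : Fin n → E) := by
      show _ = Fintype.linearCombination E c (f j : Fin n → E)
      rw [Fintype.linearCombination_apply]
      exact Finset.sum_congr rfl fun i _ => by rw [Algebra.smul_def, mul_comm]
    rw [heq, hfj]
  have hxGM : Matrix.vecMul x (G * M.map (algebraMap E F)) = 0 := by
    rw [← Matrix.vecMul_vecMul, ← hc, hcM]
  have : x = 0 := by
    have h1 : (G * M.map (algebraMap E F)) * (G * M.map (algebraMap E F))⁻¹ = 1 :=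
      Matrix.mul_nonsing_inv _ (isUnit_iff_ne_zero.mpr hdet)
    calc x = Matrix.vecMul x ((G * M.map (algebraMap E F)) * (G * M.map (algebraMap E F))⁻¹) := by
          rw [h1, Matrix.vecMul_one]
      _ = Matrix.vecMul (Matrix.vecMul x (G * M.map (algebraMap E F)))
            (G * M.map (algebraMap E F))⁻¹ := by rw [Matrix.vecMul_vecMul]
      _ = 0 := by rw [hxGM, Matrix.zero_vecMul]
  exact hx this
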